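/- arXiv:1407.7780 — 3 statements merged into one kernel-verified Lean document; each statement's English description precedes it below -/
import Mathlib

section
/- For a single base station with parameters ϑ > 0, κ ≥ 0, θ ∈ [0,1] with κθ ≤ 1, and ρ̂ ∈ (0,1), the function g(ρ) = e^{κθ(ρ - ρ̂)} · ϑρ/(1-ρ) satisfies g''(ρ) ≥ 4ϑe^{-1} for all ρ ∈ [0, 1-ε], where ε ∈ (0,1). In particular, g is strongly convex on [0, 1-ε]. -/
open Set Real

section Aux

variable (a ρhat ϑ : ℝ)

/-- first derivative formula -/
noncomputable def gAux1 (t : ℝ) : ℝ :=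
  Real.exp (a * (t - ρhat)) * (a * (ϑ * t / (1 - t)) + ϑ / (1 - t) ^ 2)

/-- second derivative formula -/
noncomputable def gAux2 (t : ℝ) : ℝ :=
  Real.exp (a * (t - ρhat)) *
    (a ^ 2 * (ϑ * t / (1 - t)) + 2 * a * ϑ / (1 - t) ^ 2 + 2 * ϑ / (1 - t) ^ 3)

lemma hasDerivAt_gAux0 {t : ℝ} (ht : t ≠ 1) :
    HasDerivAt (fun t : ℝ => Real.exp (a * (t - ρhat)) * (ϑ * t / (1 - t)))
      (gAux1 a ρhat ϑ t) t := by
  have h1 : (1 : ℝ) - t ≠ 0 := sub_ne_zero.mpr (Ne.symm ht)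
  have hlin : HasDerivAt (fun t : ℝ => a * (t - ρhat)) a t := by
    simpa using ((hasDerivAt_id t).sub_const ρhat).const_mul a
  have he : HasDerivAt (fun t : ℝ => Real.exp (a * (t - ρhat)))
      (Real.exp (a * (t - ρhat)) * a) t := hlin.exp
  have hnum : HasDerivAt (fun t : ℝ => ϑ * t) ϑ t := by
    simpa using (hasDerivAt_id t).const_mul ϑ
  have hden : HasDerivAt (fun t : ℝ => 1 - t) (-1) t := by
    simpa using (hasDerivAt_id t).const_sub 1
  have hd := hnum.div hden h1
  have := he.mul hd
  refine this.congr_deriv ?_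
  unfold gAux1
  simp only [Pi.div_apply, Pi.add_apply]
  field_simp
  ring

lemma hasDerivAt_gAux1 {t : ℝ} (ht : t ≠ 1) :
    HasDerivAt (gAux1 a ρhat ϑ) (gAux2 a ρhat ϑ t) t := by
  have h1 : (1 : ℝ) - t ≠ 0 := sub_ne_zero.mpr (Ne.symm ht)
  have h1sq : ((1 : ℝ) - t) ^ 2 ≠ 0 := pow_ne_zero _ h1
  have hlin : HasDerivAt (fun t : ℝ => a * (t - ρhat)) a t := by
    simpa using ((hasDerivAt_id t).sub_const ρhat).const_mul a
  have he : HasDerivAt (fun t : ℝ => Real.exp (a * (t - ρhat)))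
      (Real.exp (a * (t - ρhat)) * a) t := hlin.exp
  have hnum : HasDerivAt (fun t : ℝ => ϑ * t) ϑ t := by
    simpa using (hasDerivAt_id t).const_mul ϑ
  have hden : HasDerivAt (fun t : ℝ => 1 - t) (-1) t := by
    simpa using (hasDerivAt_id t).const_sub 1
  have hd := hnum.div hden h1
  have hdensq : HasDerivAt (fun t : ℝ => (1 - t) ^ 2) (2 * (1 - t) * (-1)) t := by
    simpa using (hden.fun_pow 2)
  have hfrac : HasDerivAt (fun t : ℝ => ϑ / (1 - t) ^ 2)
      ((0 * (1 - t) ^ 2 - ϑ * (2 * (1 - t) * (-1))) / ((1 - t) ^ 2) ^ 2) t :=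
    (hasDerivAt_const t ϑ).div hdensq h1sq
  have hbr := (hd.const_mul a).add hfrac
  have := he.mul hbr
  refine this.congr_deriv ?_
  unfold gAux2
  simp only [Pi.div_apply, Pi.add_apply]
  field_simp
  ring

lemma deriv_g (t : ℝ) (ht : t ≠ 1) :
    deriv (fun t : ℝ => Real.exp (a * (t - ρhat)) * (ϑ * t / (1 - t))) t
      = gAux1 a ρhat ϑ t :=
  (hasDerivAt_gAux0 a ρhat ϑ ht).deriv

lemma deriv_deriv_g (t : ℝ) (ht : t ≠ 1) :
    deriv (deriv (fun t : ℝ => Real.exp (a * (t - ρhat)) * (ϑ * t / (1 - t)))) t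
      = gAux2 a ρhat ϑ t := by
  have hev : deriv (fun t : ℝ => Real.exp (a * (t - ρhat)) * (ϑ * t / (1 - t)))
      =ᶠ[nhds t] gAux1 a ρhat ϑ := by
    filter_upwards [isOpen_ne.mem_nhds ht] with x hx
    exact deriv_g a ρhat ϑ x hx
  rw [hev.deriv_eq]
  exact (hasDerivAt_gAux1 a ρhat ϑ ht).deriv

end Aux

/-- Key pointwise bound on the second derivative. -/
lemma gAux2_lower (a ρhat ϑ ε : ℝ) (hϑ : 0 < ϑ) (ha0 : 0 ≤ a) (ha1 : a ≤ 1)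
    (hρhat : ρhat ∈ Set.Ioo (0:ℝ) 1) (hε : ε ∈ Set.Ioo (0:ℝ) 1) {ρ : ℝ}
    (hρ : ρ ∈ Set.Icc (0:ℝ) (1 - ε)) : 4 * ϑ * Real.exp (-1) ≤ gAux2 a ρhat ϑ ρ := by
  obtain ⟨hρ0, hρ1⟩ := hρ
  have hu : 0 < 1 - ρ := by linarith [hε.1]
  have hu1 : 1 - ρ ≤ 1 := by linarith
  have hE : Real.exp (-a) ≤ Real.exp (a * (ρ - ρhat)) := by
    apply Real.exp_le_exp.mpr
    nlinarith [hρhat.2]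
  have hB : 2 * a * ϑ + 2 * ϑ ≤
      a ^ 2 * (ϑ * ρ / (1 - ρ)) + 2 * a * ϑ / (1 - ρ) ^ 2 + 2 * ϑ / (1 - ρ) ^ 3 := by
    have h0 : 0 ≤ a ^ 2 * (ϑ * ρ / (1 - ρ)) := by positivity
    have hsq : (1 - ρ) ^ 2 ≤ 1 := by nlinarith
    have hcu : (1 - ρ) ^ 3 ≤ 1 := by nlinarith
    have h2 : 2 * a * ϑ ≤ 2 * a * ϑ / (1 - ρ) ^ 2 := by
      rw [le_div_iff₀ (by positivity)]
      nlinarith [mul_le_mul_of_nonneg_left hsq (by positivity : (0:ℝ) ≤ 2 * a * ϑ)]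
    have h3 : 2 * ϑ ≤ 2 * ϑ / (1 - ρ) ^ 3 := by
      rw [le_div_iff₀ (by positivity)]
      nlinarith [mul_le_mul_of_nonneg_left hcu (by positivity : (0:ℝ) ≤ 2 * ϑ)]
    linarith
  have hBnn : (0:ℝ) ≤ 2 * a * ϑ + 2 * ϑ := by positivity
  have hstep : Real.exp (-a) * (2 * a * ϑ + 2 * ϑ) ≤ gAux2 a ρhat ϑ ρ := by
    unfold gAux2
    exact mul_le_mul hE hB hBnn (Real.exp_pos _).le
  refine le_trans ?_ hstep
  have hexp : Real.exp (-a) = Real.exp (-1) * Real.exp (1 - a) := by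
    rw [← Real.exp_add]; ring_nf
  rw [hexp]
  have h1a : (1 - a) + 1 ≤ Real.exp (1 - a) := Real.add_one_le_exp _
  have he1 : (0:ℝ) < Real.exp (-1) := Real.exp_pos _
  have key : (4:ℝ) * ϑ ≤ Real.exp (1 - a) * (2 * a * ϑ + 2 * ϑ) := by
    nlinarith [mul_le_mul_of_nonneg_right h1a hBnn,
      mul_nonneg (mul_nonneg ha0 (sub_nonneg.mpr ha1)) hϑ.le]
  calc 4 * ϑ * Real.exp (-1) = Real.exp (-1) * (4 * ϑ) := by ring
    _ ≤ Real.exp (-1) * (Real.exp (1 - a) * (2 * a * ϑ + 2 * ϑ)) :=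
        mul_le_mul_of_nonneg_left key he1.le
    _ = Real.exp (-1) * Real.exp (1 - a) * (2 * a * ϑ + 2 * ϑ) := by ring

/-- For `ϑ > 0`, `κ ≥ 0`, `θ ∈ [0,1]` with `κθ ≤ 1`, and `ρ̂ ∈ (0,1)`, the weighted latency
indicator `g(ρ) = e^{κθ(ρ-ρ̂)}·ϑρ/(1-ρ)` satisfies `g''(ρ) ≥ 4ϑe⁻¹` on `[0, 1-ε]`;
in particular `g` is strongly convex there. -/
theorem stmt_4 (ϑ κ θ ρhat ε : ℝ) (hϑ : 0 < ϑ) (hκ : 0 ≤ κ) (hθ : θ ∈ Set.Icc (0:ℝ) 1)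
    (hκθ : κ * θ ≤ 1) (hρhat : ρhat ∈ Set.Ioo (0:ℝ) 1) (hε : ε ∈ Set.Ioo (0:ℝ) 1) :
    (∀ ρ ∈ Set.Icc (0:ℝ) (1 - ε),
      4 * ϑ * Real.exp (-1) ≤
        deriv (deriv (fun t : ℝ => Real.exp (κ * θ * (t - ρhat)) * (ϑ * t / (1 - t)))) ρ)
    ∧ StrongConvexOn (Set.Icc (0:ℝ) (1 - ε)) (4 * ϑ * Real.exp (-1))
        (fun t : ℝ => Real.exp (κ * θ * (t - ρhat)) * (ϑ * t / (1 - t))) := by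
  set a := κ * θ with ha
  have ha0 : 0 ≤ a := mul_nonneg hκ hθ.1
  have ha1 : a ≤ 1 := hκθ
  have hne : ∀ ρ ∈ Set.Icc (0:ℝ) (1 - ε), ρ ≠ 1 := by
    rintro ρ hρ rfl
    linarith [hρ.2, hε.1]
  have hd2 : ∀ ρ ∈ Set.Icc (0:ℝ) (1 - ε),
      4 * ϑ * Real.exp (-1) ≤
        deriv (deriv (fun t : ℝ => Real.exp (a * (t - ρhat)) * (ϑ * t / (1 - t)))) ρ := by
    intro ρ hρ
    rw [deriv_deriv_g a ρhat ϑ ρ (hne ρ hρ)]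
    exact gAux2_lower a ρhat ϑ ε hϑ ha0 ha1 hρhat hε hρ
  refine ⟨hd2, ?_⟩
  set m := 4 * ϑ * Real.exp (-1) with hm
  have hmpos : 0 < m := by positivity
  rw [strongConvexOn_iff_convex]
  have hfun : (fun x : ℝ => Real.exp (a * (x - ρhat)) * (ϑ * x / (1 - x)) - m / 2 * ‖x‖ ^ 2)
      = fun x : ℝ => Real.exp (a * (x - ρhat)) * (ϑ * x / (1 - x)) - m / 2 * x ^ 2 := by
    funext x; rw [Real.norm_eq_abs, sq_abs]
  rw [hfun]
  set h : ℝ → ℝ := fun x => Real.exp (a * (x - ρhat)) * (ϑ * x / (1 - x)) - m / 2 * x ^ 2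
    with hh
  have hsq : ∀ t : ℝ, HasDerivAt (fun x : ℝ => m / 2 * x ^ 2) (m * t) t := by
    intro t
    have := (hasDerivAt_pow 2 t).const_mul (m / 2)
    refine this.congr_deriv ?_
    ring
  have hhd : ∀ t : ℝ, t ≠ 1 → HasDerivAt h (gAux1 a ρhat ϑ t - m * t) t := by
    intro t ht
    exact (hasDerivAt_gAux0 a ρhat ϑ ht).sub (hsq t)
  have hhd' : ∀ t : ℝ, t ≠ 1 → deriv h t = gAux1 a ρhat ϑ t - m * t := fun t ht =>
    (hhd t ht).deriv
  have hderivEq : ∀ t : ℝ, t ≠ 1 →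
      deriv h =ᶠ[nhds t] fun x => gAux1 a ρhat ϑ x - m * x := by
    intro t ht
    filter_upwards [isOpen_ne.mem_nhds ht] with x hx
    exact hhd' x hx
  have hh1d : ∀ t : ℝ, t ≠ 1 →
      HasDerivAt (fun x => gAux1 a ρhat ϑ x - m * x) (gAux2 a ρhat ϑ t - m) t := by
    intro t ht
    exact (hasDerivAt_gAux1 a ρhat ϑ ht).sub (by simpa using (hasDerivAt_id t).const_mul m)
  apply convexOn_of_deriv2_nonneg (convex_Icc _ _)
  · intro t htmem
    exact (hhd t (hne t htmem)).continuousAt.continuousWithinAt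
  · intro t htmem
    have := interior_subset (s := Set.Icc (0:ℝ) (1 - ε)) htmem
    exact (hhd t (hne t this)).differentiableAt.differentiableWithinAt
  · intro t htmem
    have htI := interior_subset (s := Set.Icc (0:ℝ) (1 - ε)) htmem
    have ht1 := hne t htI
    have : DifferentiableAt ℝ (deriv h) t := by
      rw [(hderivEq t ht1).differentiableAt_iff]
      exact (hh1d t ht1).differentiableAt
    exact this.differentiableWithinAt
  · intro t htmem
    have htI := interior_subset (s := Set.Icc (0:ℝ) (1 - ε)) htmem
    have ht1 := hne t htI
    have h2 : deriv (deriv h) t = gAux2 a ρhat ϑ t - m := by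
      rw [(hderivEq t ht1).deriv_eq]
      exact (hh1d t ht1).deriv
    simp only [Function.iterate_succ, Function.iterate_zero, Function.comp_apply, id_eq]
    rw [h2]
    have := gAux2_lower a ρhat ϑ ε hϑ ha0 ha1 hρhat hε htI
    linarith
end

section
/- Let ψ(ρ) = Σ_{j∈B} w_j(ρ_j)L(ρ_j) where each w_j(ρ_j) = e^{κθ_j(ρ_j - ρ̂_j)} and L(ρ_j) = ϑ_j ρ_j/(1-ρ_j). Then ψ is strongly convex on the box [0, 1-ε]^B: its Hessian is diagonal with all diagonal entries bounded below by a positive constant q (one can take q = 4 min_j ϑ_j e^{-1} when κθ_j ≤ 1 for all j). -/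
open Set Real

private lemma expBound (x : ℝ) (h0 : 0 ≤ x) (h1 : x ≤ 1) :
    2 * Real.exp (-1) ≤ Real.exp (-x) * (1 + x) := by
  have hconv := convexOn_exp.2 (mem_univ (0:ℝ)) (mem_univ (1:ℝ))
    (by linarith : (0:ℝ) ≤ 1 - x) h0 (by ring)
  simp only [smul_eq_mul, mul_zero, mul_one, zero_add, Real.exp_zero] at hconv
  have key : 2 * Real.exp x ≤ Real.exp 1 * (1 + x) := by
    nlinarith [Real.exp_one_gt_d9, hconv]
  have key2 : 2 * Real.exp (x - 1) ≤ 1 + x := by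
    rw [Real.exp_sub, mul_div_assoc', div_le_iff₀ (Real.exp_pos 1)]
    nlinarith [key]
  have hsplit : Real.exp (-1) = Real.exp (x - 1) * Real.exp (-x) := by
    rw [← Real.exp_add]; ring_nf
  rw [hsplit]
  nlinarith [key2, (Real.exp_pos (-x)).le]

noncomputable def F1 (a c v : ℝ) : ℝ → ℝ :=
  fun s => Real.exp (a * (s - c)) * (a * (v * s / (1 - s)) + v / (1 - s) ^ 2)

noncomputable def F2 (a c v : ℝ) : ℝ → ℝ :=
  fun s => Real.exp (a * (s - c)) *
    (a ^ 2 * (v * s / (1 - s)) + 2 * a * v / (1 - s) ^ 2 + 2 * v / (1 - s) ^ 3)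

private lemma hd1 (a c v s : ℝ) (hs : s ≠ 1) :
    HasDerivAt (fun s => Real.exp (a * (s - c)) * (v * s / (1 - s))) (F1 a c v s) s := by
  have hne : (1:ℝ) - s ≠ 0 := sub_ne_zero.2 (Ne.symm hs)
  have hA : HasDerivAt (fun s => Real.exp (a * (s - c))) (Real.exp (a * (s - c)) * a) s := by
    simpa using (((hasDerivAt_id s).sub_const c).const_mul a).exp
  have hB : HasDerivAt (fun s => v * s / (1 - s)) (v / (1 - s) ^ 2) s := by
    have h1 : HasDerivAt (fun s : ℝ => v * s) v s := by simpa using (hasDerivAt_id s).const_mul v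
    have h2 : HasDerivAt (fun s : ℝ => 1 - s) (-1) s := by
      simpa using (hasDerivAt_id s).const_sub 1
    have := h1.div h2 hne
    refine this.congr_deriv ?_
    field_simp
    ring
  have := hA.mul hB
  refine this.congr_deriv ?_
  simp only [F1]
  ring

private lemma hd2 (a c v s : ℝ) (hs : s ≠ 1) :
    HasDerivAt (F1 a c v) (F2 a c v s) s := by
  have hne : (1:ℝ) - s ≠ 0 := sub_ne_zero.2 (Ne.symm hs)
  have hA : HasDerivAt (fun s => Real.exp (a * (s - c))) (Real.exp (a * (s - c)) * a) s := by
    simpa using (((hasDerivAt_id s).sub_const c).const_mul a).exp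
  have hB : HasDerivAt (fun s => v * s / (1 - s)) (v / (1 - s) ^ 2) s := by
    have h1 : HasDerivAt (fun s : ℝ => v * s) v s := by simpa using (hasDerivAt_id s).const_mul v
    have h2 : HasDerivAt (fun s : ℝ => 1 - s) (-1) s := by
      simpa using (hasDerivAt_id s).const_sub 1
    have := h1.div h2 hne
    refine this.congr_deriv ?_
    field_simp
    ring
  have h2 : HasDerivAt (fun s : ℝ => 1 - s) (-1) s := by
    simpa using (hasDerivAt_id s).const_sub 1
  have hC : HasDerivAt (fun s : ℝ => v / (1 - s) ^ 2) (2 * v / (1 - s) ^ 3) s := by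
    have hden : HasDerivAt (fun s : ℝ => (1 - s) ^ 2) ((2 : ℕ) * (1 - s) ^ 1 * (-1)) s :=
      h2.pow 2
    have := (hasDerivAt_const s v).div hden (pow_ne_zero 2 hne)
    refine this.congr_deriv ?_
    field_simp
    ring
  have hbr : HasDerivAt (fun s => a * (v * s / (1 - s)) + v / (1 - s) ^ 2)
      (a * (v / (1 - s) ^ 2) + 2 * v / (1 - s) ^ 3) s := (hB.const_mul a).add hC
  have := hA.mul hbr
  refine this.congr_deriv ?_
  simp only [F2]
  field_simp
  ring

private lemma hdq1 (a c v q s : ℝ) (hs : s ≠ 1) :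
    HasDerivAt (fun s => Real.exp (a * (s - c)) * (v * s / (1 - s)) - q / 2 * s ^ 2)
      (F1 a c v s - q * s) s := by
  have hq : HasDerivAt (fun s : ℝ => q / 2 * s ^ 2) (q * s) s := by
    have := (hasDerivAt_pow 2 s).const_mul (q / 2)
    refine this.congr_deriv ?_
    push_cast
    ring
  exact (hd1 a c v s hs).sub hq

private lemma hdq2 (a c v q s : ℝ) (hs : s ≠ 1) :
    HasDerivAt (fun s => F1 a c v s - q * s) (F2 a c v s - q) s := by
  have hq : HasDerivAt (fun s : ℝ => q * s) q s := by
    simpa using (hasDerivAt_id s).const_mul q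
  exact (hd2 a c v s hs).sub hq

private lemma derivq_eq (a c v q t : ℝ) (ht : t < 1) :
    deriv (fun s => Real.exp (a * (s - c)) * (v * s / (1 - s)) - q / 2 * s ^ 2) t
      = F1 a c v t - q * t :=
  (hdq1 a c v q t ht.ne).deriv

private lemma derivq2_eq (a c v q t : ℝ) (ht : t < 1) :
    deriv (deriv (fun s => Real.exp (a * (s - c)) * (v * s / (1 - s)) - q / 2 * s ^ 2)) t
      = F2 a c v t - q := by
  have hmem : Iio (1:ℝ) ∈ nhds t := Iio_mem_nhds ht
  have hev : deriv (fun s => Real.exp (a * (s - c)) * (v * s / (1 - s)) - q / 2 * s ^ 2)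
      =ᶠ[nhds t] (fun s => F1 a c v s - q * s) :=
    Filter.eventually_of_mem hmem fun s hs => derivq_eq a c v q s hs
  rw [hev.deriv_eq, (hdq2 a c v q t ht.ne).deriv]

private lemma deriv2_eq (a c v t : ℝ) (ht : t < 1) :
    deriv (deriv (fun s => Real.exp (a * (s - c)) * (v * s / (1 - s)))) t = F2 a c v t := by
  have h := derivq2_eq a c v 0 t ht
  simp only [zero_div, zero_mul, sub_zero] at h
  simpa using h

private lemma F2_bound (a c v t : ℝ) (hv : 0 < v) (ha0 : 0 ≤ a) (ha1 : a ≤ 1)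
    (hc1 : c < 1) (ht0 : 0 ≤ t) (ht1 : t < 1) :
    4 * v * Real.exp (-1) ≤ F2 a c v t := by
  set u : ℝ := 1 - t with hu_def
  have hu : 0 < u := by simp [hu_def]; linarith
  have hu1 : u ≤ 1 := by simp [hu_def]; linarith
  set x : ℝ := a * u with hx_def
  have hx0 : 0 ≤ x := mul_nonneg ha0 hu.le
  have hx1 : x ≤ 1 := by
    calc x ≤ 1 * 1 := mul_le_mul ha1 hu1 hu.le zero_le_one
    _ = 1 := one_mul 1
  have hE := expBound x hx0 hx1
  have hw : Real.exp (-x) ≤ Real.exp (a * (t - c)) := by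
    apply Real.exp_le_exp.2
    have : -x = a * (t - 1) := by rw [hx_def, hu_def]; ring
    rw [this]
    apply mul_le_mul_of_nonneg_left _ ha0
    linarith
  have hbr_eq : (2 * v / u ^ 3) * (1 + x) = 2 * a * v / u ^ 2 + 2 * v / u ^ 3 := by
    rw [hx_def]
    field_simp
    ring
  have hterm : 0 ≤ a ^ 2 * (v * t / u) :=
    mul_nonneg (sq_nonneg a) (div_nonneg (mul_nonneg hv.le ht0) hu.le)
  have hbr : (2 * v / u ^ 3) * (1 + x)
      ≤ a ^ 2 * (v * t / u) + 2 * a * v / u ^ 2 + 2 * v / u ^ 3 := by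
    rw [hbr_eq]; linarith
  have hbrpos : 0 ≤ a ^ 2 * (v * t / u) + 2 * a * v / u ^ 2 + 2 * v / u ^ 3 := by
    have h1 : 0 ≤ 2 * a * v / u ^ 2 := by positivity
    have h2 : 0 ≤ 2 * v / u ^ 3 := by positivity
    linarith
  have hcube : 2 * v ≤ 2 * v / u ^ 3 := by
    rw [le_div_iff₀ (by positivity)]
    nlinarith [(pow_le_one₀ hu.le hu1 : u ^ 3 ≤ 1), hv]
  have hEpos : 0 ≤ Real.exp (-x) * (1 + x) := by positivity
  calc 4 * v * Real.exp (-1) = (2 * v) * (2 * Real.exp (-1)) := by ring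
    _ ≤ (2 * v) * (Real.exp (-x) * (1 + x)) :=
        mul_le_mul_of_nonneg_left hE (by linarith)
    _ ≤ (2 * v / u ^ 3) * (Real.exp (-x) * (1 + x)) :=
        mul_le_mul_of_nonneg_right hcube hEpos
    _ = Real.exp (-x) * ((2 * v / u ^ 3) * (1 + x)) := by ring
    _ ≤ Real.exp (-x) * (a ^ 2 * (v * t / u) + 2 * a * v / u ^ 2 + 2 * v / u ^ 3) :=
        mul_le_mul_of_nonneg_left hbr (Real.exp_pos _).le
    _ ≤ Real.exp (a * (t - c)) * (a ^ 2 * (v * t / u) + 2 * a * v / u ^ 2 + 2 * v / u ^ 3) :=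
        mul_le_mul_of_nonneg_right hw hbrpos
    _ = F2 a c v t := by simp only [F2, hu_def]

/-- `ψ(ρ) = Σ_j w_j(ρ_j)L(ρ_j)` with `w_j(ρ) = e^{κθ_j(ρ-ρ̂_j)}` and `L(ρ) = ϑ_jρ/(1-ρ)` is
strongly convex on the box `[0, 1-ε]^B`: its Hessian is diagonal with all diagonal entries
bounded below by `q = 4 (min_j ϑ_j) e⁻¹ > 0` when `κθ_j ≤ 1` for all `j`. -/
theorem stmt_5 {B : Type*} [Fintype B] [Nonempty B]
    (ϑ θ ρhat : B → ℝ) (κ ε : ℝ)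
    (hϑ : ∀ j, 0 < ϑ j) (hθ : ∀ j, θ j ∈ Set.Icc (0:ℝ) 1) (hκ : 0 ≤ κ)
    (hκθ : ∀ j, κ * θ j ≤ 1) (hρhat : ∀ j, ρhat j ∈ Set.Ioo (0:ℝ) 1)
    (hε : ε ∈ Set.Ioo (0:ℝ) 1) :
    (∀ j, ∀ t ∈ Set.Icc (0:ℝ) (1 - ε),
      4 * (Finset.univ.inf' Finset.univ_nonempty ϑ) * Real.exp (-1) ≤
        deriv (deriv (fun s : ℝ =>
          Real.exp (κ * θ j * (s - ρhat j)) * (ϑ j * s / (1 - s)))) t)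
    ∧ StrongConvexOn {ρ : EuclideanSpace ℝ B | ∀ j, ρ j ∈ Set.Icc (0:ℝ) (1 - ε)}
        (4 * (Finset.univ.inf' Finset.univ_nonempty ϑ) * Real.exp (-1))
        (fun ρ : EuclideanSpace ℝ B =>
          ∑ j, Real.exp (κ * θ j * (ρ j - ρhat j)) * (ϑ j * ρ j / (1 - ρ j))) := by
  obtain ⟨hε0, hε1⟩ := hε
  set q : ℝ := 4 * (Finset.univ.inf' Finset.univ_nonempty ϑ) * Real.exp (-1) with hq_def
  have hminle : ∀ j, (Finset.univ.inf' Finset.univ_nonempty ϑ) ≤ ϑ j :=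
    fun j => Finset.inf'_le _ (Finset.mem_univ j)
  have hqle : ∀ j, q ≤ 4 * ϑ j * Real.exp (-1) := by
    intro j
    apply mul_le_mul_of_nonneg_right _ (Real.exp_pos _).le
    nlinarith [hminle j]
  -- the bound on the second derivative
  have hbound : ∀ j, ∀ t ∈ Set.Icc (0:ℝ) (1 - ε),
      q ≤ deriv (deriv (fun s : ℝ =>
        Real.exp (κ * θ j * (s - ρhat j)) * (ϑ j * s / (1 - s)))) t := by
    intro j t ht
    have ht1 : t < 1 := lt_of_le_of_lt ht.2 (by linarith)
    rw [deriv2_eq (κ * θ j) (ρhat j) (ϑ j) t ht1]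
    refine le_trans (hqle j) ?_
    exact F2_bound (κ * θ j) (ρhat j) (ϑ j) t (hϑ j) (mul_nonneg hκ (hθ j).1) (hκθ j)
      (hρhat j).2 ht.1 ht1
  refine ⟨hbound, ?_⟩
  rw [strongConvexOn_iff_convex]
  set S : Set (EuclideanSpace ℝ B) := {ρ | ∀ j, ρ j ∈ Set.Icc (0:ℝ) (1 - ε)} with hS_def
  have hSconv : Convex ℝ S := by
    intro x hx y hy α β hα hβ hab
    intro j
    have := (convex_Icc (0:ℝ) (1 - ε)) (hx j) (hy j) hα hβ hab
    simpa [PiLp.add_apply, PiLp.smul_apply, smul_eq_mul] using this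
  -- per-coordinate convexity
  have hcv : ∀ j, ConvexOn ℝ (Set.Icc (0:ℝ) (1 - ε))
      (fun t => Real.exp (κ * θ j * (t - ρhat j)) * (ϑ j * t / (1 - t)) - q / 2 * t ^ 2) := by
    intro j
    set a := κ * θ j
    set c := ρhat j
    set v := ϑ j
    have hlt : ∀ t ∈ Set.Icc (0:ℝ) (1 - ε), t < 1 :=
      fun t ht => lt_of_le_of_lt ht.2 (by linarith)
    apply convexOn_of_deriv2_nonneg (convex_Icc _ _)
    · intro t ht
      exact ((hdq1 a c v q t (hlt t ht).ne).differentiableAt).continuousAt.continuousWithinAt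
    · rw [interior_Icc]
      intro t ht
      exact ((hdq1 a c v q t (lt_trans ht.2 (by linarith)).ne).differentiableAt).differentiableWithinAt
    · rw [interior_Icc]
      intro t ht
      have ht1 : t < 1 := lt_trans ht.2 (by linarith)
      have hmem : Iio (1:ℝ) ∈ nhds t := Iio_mem_nhds ht1
      have hev : deriv (fun s => Real.exp (a * (s - c)) * (v * s / (1 - s)) - q / 2 * s ^ 2)
          =ᶠ[nhds t] (fun s => F1 a c v s - q * s) :=
        Filter.eventually_of_mem hmem fun s hs => derivq_eq a c v q s hs
      exact (((hdq2 a c v q t ht1.ne).differentiableAt).congr_of_eventuallyEq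
        hev).differentiableWithinAt
    · rw [interior_Icc]
      intro t ht
      have ht1 : t < 1 := lt_trans ht.2 (by linarith)
      have h2 : deriv^[2] (fun s => Real.exp (a * (s - c)) * (v * s / (1 - s)) - q / 2 * s ^ 2) t
          = F2 a c v t - q := by
        rw [show (2:ℕ) = 1 + 1 from rfl, Function.iterate_succ_apply', Function.iterate_one]
        exact derivq2_eq a c v q t ht1
      rw [h2, sub_nonneg]
      refine le_trans (hqle j) ?_
      exact F2_bound a c v t (hϑ j) (mul_nonneg hκ (hθ j).1) (hκθ j)
        (hρhat j).2 (le_of_lt ht.1) ht1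
  -- composition with coordinate projections
  have hcomp : ∀ j, ConvexOn ℝ S (fun ρ : EuclideanSpace ℝ B =>
      Real.exp (κ * θ j * (ρ j - ρhat j)) * (ϑ j * ρ j / (1 - ρ j)) - q / 2 * (ρ j) ^ 2) := by
    intro j
    refine ⟨hSconv, fun x hx y hy α β hα hβ hab => ?_⟩
    have := (hcv j).2 (hx j) (hy j) hα hβ hab
    simpa [PiLp.add_apply, PiLp.smul_apply, smul_eq_mul] using this
  have hsum : ∀ (s : Finset B), ConvexOn ℝ S (fun ρ : EuclideanSpace ℝ B =>
      ∑ j ∈ s, (Real.exp (κ * θ j * (ρ j - ρhat j)) * (ϑ j * ρ j / (1 - ρ j))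
        - q / 2 * (ρ j) ^ 2)) := by
    intro s
    classical
    induction s using Finset.induction with
    | empty => simpa using convexOn_const (0:ℝ) hSconv
    | insert _ _ h ih =>
        simp only [Finset.sum_insert h]
        exact (hcomp _).add ih
  have heq : (fun x : EuclideanSpace ℝ B =>
      (∑ j, Real.exp (κ * θ j * (x j - ρhat j)) * (ϑ j * x j / (1 - x j))) - q / 2 * ‖x‖ ^ 2)
      = (fun ρ : EuclideanSpace ℝ B =>
        ∑ j, (Real.exp (κ * θ j * (ρ j - ρhat j)) * (ϑ j * ρ j / (1 - ρ j))
          - q / 2 * (ρ j) ^ 2)) := by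
    funext ρ
    have hnorm : ‖ρ‖ ^ 2 = ∑ j, (ρ j) ^ 2 := by
      rw [EuclideanSpace.norm_eq, Real.sq_sqrt (by positivity)]
      simp [Real.norm_eq_abs, sq_abs]
    rw [hnorm, Finset.mul_sum, ← Finset.sum_sub_distrib]
  rw [heq]
  exact hsum Finset.univ
end

section
/- Let ψ(ρ) = Σ_{j∈B} w_j(ρ_j)f(ρ_j) where each f is positive, convex, and non-decreasing on [0, 1-ε] and w_j(ρ_j) = e^{κθ_j(ρ_j-ρ̂_j)} with κθ_j > 0. Then ψ is strongly convex on [0, 1-ε]^B. -/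
open Set Real

/-- `C e^{at} - (C a²/2) t²` is convex on `[0, L]` when `C ≥ 0` and `a > 0`, since its second
derivative is `C a² (e^{at} - 1) ≥ 0` for `t ≥ 0`. -/
lemma exp_sub_quad_convexOn (a C L : ℝ) (hC : 0 ≤ C) (ha : 0 < a) :
    ConvexOn ℝ (Set.Icc (0:ℝ) L)
      (fun t => C * Real.exp (a * t) - (C * a ^ 2) / 2 * t ^ 2) := by
  have hexp : ∀ t : ℝ, HasDerivAt (fun t : ℝ => Real.exp (a * t)) (Real.exp (a * t) * a) t :=
    fun t => by simpa using ((hasDerivAt_id t).const_mul a).exp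
  have h1 : ∀ t : ℝ, HasDerivAt (fun t => C * Real.exp (a * t) - (C * a ^ 2) / 2 * t ^ 2)
      (C * a * Real.exp (a * t) - C * a ^ 2 * t) t := by
    intro t
    have hq : HasDerivAt (fun t : ℝ => (C * a ^ 2) / 2 * t ^ 2)
        ((C * a ^ 2) / 2 * (2 * t)) t := by
      simpa using ((hasDerivAt_pow 2 t).const_mul ((C * a ^ 2) / 2))
    have := ((hexp t).const_mul C).sub hq
    exact this.congr_deriv (by ring)
  have h2 : ∀ t : ℝ, HasDerivAt (fun t => C * a * Real.exp (a * t) - C * a ^ 2 * t)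
      (C * a ^ 2 * Real.exp (a * t) - C * a ^ 2) t := by
    intro t
    have := ((hexp t).const_mul (C * a)).sub ((hasDerivAt_id t).const_mul (C * a ^ 2))
    exact this.congr_deriv (by ring)
  have hd : deriv (fun t => C * Real.exp (a * t) - (C * a ^ 2) / 2 * t ^ 2)
      = fun t => C * a * Real.exp (a * t) - C * a ^ 2 * t := funext fun t => (h1 t).deriv
  refine convexOn_of_deriv2_nonneg (convex_Icc _ _)
    (fun t _ => (h1 t).continuousAt.continuousWithinAt)
    (fun t _ => ((h1 t).differentiableAt).differentiableWithinAt)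
    (fun t _ => by rw [hd]; exact ((h2 t).differentiableAt).differentiableWithinAt) ?_
  intro x hx
  rw [interior_Icc] at hx
  have hiter : deriv^[2] (fun t => C * Real.exp (a * t) - (C * a ^ 2) / 2 * t ^ 2) x
      = C * a ^ 2 * Real.exp (a * x) - C * a ^ 2 := by
    simp only [Function.iterate_succ, Function.iterate_zero, Function.comp_apply, id_eq, hd]
    exact (h2 x).deriv
  rw [hiter]
  have h1e : (1:ℝ) ≤ Real.exp (a * x) := by
    have : (0:ℝ) ≤ a * x := mul_nonneg ha.le hx.1.le
    linarith [Real.add_one_le_exp (a * x), this]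
  nlinarith [mul_nonneg (mul_nonneg hC (sq_nonneg a)) (sub_nonneg.2 h1e)]

/-- One-dimensional key lemma: `e^{a(t-c)} f(t)` minus a suitable quadratic is convex. -/
lemma key1d (a c L : ℝ) (ha : 0 < a) (f : ℝ → ℝ)
    (hfpos : ∀ ρ ∈ Set.Icc (0:ℝ) L, 0 < f ρ)
    (hfconv : ConvexOn ℝ (Set.Icc (0:ℝ) L) f)
    (hfmono : MonotoneOn f (Set.Icc (0:ℝ) L)) (hL : 0 ≤ L) :
    ConvexOn ℝ (Set.Icc (0:ℝ) L)
      (fun t => Real.exp (a * (t - c)) * f t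
        - (Real.exp (a * (0 - c)) * f 0 * a ^ 2) / 2 * t ^ 2) := by
  set M : ℝ := Real.exp (-(a * c)) with hM
  have hMpos : 0 < M := Real.exp_pos _
  have h0mem : (0:ℝ) ∈ Set.Icc (0:ℝ) L := ⟨le_refl _, hL⟩
  have hmpos : 0 < f 0 := hfpos 0 h0mem
  have hexp : ∀ t : ℝ, Real.exp (a * (t - c)) = M * Real.exp (a * t) := by
    intro t
    rw [hM, ← Real.exp_add]
    ring_nf
  have hexpconv : ConvexOn ℝ (Set.Icc (0:ℝ) L) (fun t => Real.exp (a * t)) := by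
    have : ConvexOn ℝ (Set.univ : Set ℝ) (fun t => Real.exp (a * t)) := by
      have := convexOn_exp.comp_affineMap
        (LinearMap.toAffineMap (LinearMap.smulRight (LinearMap.id : ℝ →ₗ[ℝ] ℝ) a))
      simpa [Function.comp_def, mul_comm] using this
    exact this.subset (Set.subset_univ _) (convex_Icc _ _)
  have hexpmono : MonotoneOn (fun t => Real.exp (a * t)) (Set.Icc (0:ℝ) L) := by
    intro x _ y _ hxy
    exact Real.exp_le_exp.2 (by nlinarith)
  have hsubconv : ConvexOn ℝ (Set.Icc (0:ℝ) L) (fun t => f t - f 0) :=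
    hfconv.sub (concaveOn_const (f 0) (convex_Icc _ _))
  have hsubmono : MonotoneOn (fun t => f t - f 0) (Set.Icc (0:ℝ) L) := by
    intro x hx y hy hxy
    have := hfmono hx hy hxy
    show f x - f 0 ≤ f y - f 0
    linarith
  have hpart1 : ConvexOn ℝ (Set.Icc (0:ℝ) L)
      (fun t => Real.exp (a * t) * (f t - f 0)) := by
    have := hexpconv.mul hsubconv
      (fun x _ => (Real.exp_pos _).le)
      (fun x hx => by
        have := hfmono h0mem hx hx.1
        show (0:ℝ) ≤ f x - f 0
        linarith)
      (hexpmono.monovaryOn hsubmono)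
    simpa [Pi.mul_def] using this
  have hpart2 := exp_sub_quad_convexOn a (f 0) L hmpos.le ha
  have hcomb := (hpart1.smul hMpos.le).add (hpart2.smul hMpos.le)
  have heq : ((fun t => M • (Real.exp (a * t) * (f t - f 0)))
        + fun t => M • (f 0 * Real.exp (a * t) - (f 0 * a ^ 2) / 2 * t ^ 2))
      = (fun t => Real.exp (a * (t - c)) * f t
        - (Real.exp (a * (0 - c)) * f 0 * a ^ 2) / 2 * t ^ 2) := by
    funext t
    simp only [Pi.add_apply, smul_eq_mul]
    rw [hexp t, hexp 0, mul_zero, Real.exp_zero]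
    ring
  rwa [heq] at hcomb

/-- `ψ(ρ) = Σ_j w_j(ρ_j) f(ρ_j)`, with `f` positive, convex and non-decreasing on `[0,1-ε]`
and `w_j(ρ) = e^{κθ_j(ρ-ρ̂_j)}`, `κθ_j > 0`, is strongly convex on the box `[0, 1-ε]^B`. -/
theorem stmt_10 {B : Type*} [Fintype B] [Nonempty B]
    (θ ρhat : B → ℝ) (κ ε : ℝ)
    (hκθ : ∀ j, 0 < κ * θ j) (hθ : ∀ j, θ j ∈ Set.Icc (0:ℝ) 1)
    (hρhat : ∀ j, ρhat j ∈ Set.Ioo (0:ℝ) 1) (hε : ε ∈ Set.Ioo (0:ℝ) 1)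
    (f : ℝ → ℝ)
    (hfpos : ∀ ρ ∈ Set.Icc (0:ℝ) (1 - ε), 0 < f ρ)
    (hfconv : ConvexOn ℝ (Set.Icc (0:ℝ) (1 - ε)) f)
    (hfmono : MonotoneOn f (Set.Icc (0:ℝ) (1 - ε))) :
    ∃ q > (0:ℝ), StrongConvexOn {ρ : EuclideanSpace ℝ B | ∀ j, ρ j ∈ Set.Icc (0:ℝ) (1 - ε)} q
      (fun ρ : EuclideanSpace ℝ B => ∑ j, Real.exp (κ * θ j * (ρ j - ρhat j)) * f (ρ j)) := by
  have hL : (0:ℝ) ≤ 1 - ε := by have := hε.2; linarith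
  set Q : B → ℝ :=
    fun j => (Real.exp ((κ * θ j) * (0 - ρhat j)) * f 0 * (κ * θ j) ^ 2) / 2 with hQdef
  have hQpos : ∀ j, 0 < Q j := by
    intro j
    have h1 := hκθ j
    have hf0 : 0 < f 0 := hfpos 0 ⟨le_refl _, hL⟩
    have h2 : 0 < Real.exp ((κ * θ j) * (0 - ρhat j)) := Real.exp_pos _
    rw [hQdef]
    positivity
  obtain ⟨j₀⟩ := ‹Nonempty B›
  set q : ℝ := Finset.univ.inf' ⟨j₀, Finset.mem_univ j₀⟩ (fun j => 2 * Q j) with hqdef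
  have hqpos : 0 < q := by
    rw [hqdef]; refine (Finset.lt_inf'_iff _).2 ?_
    intro j _
    have := hQpos j
    linarith
  have hqle : ∀ j, q ≤ 2 * Q j := fun j => Finset.inf'_le _ (Finset.mem_univ j)
  refine ⟨q, hqpos, ?_⟩
  rw [strongConvexOn_iff_convex]
  -- per-coordinate convex functions
  have hj : ∀ j : B, ConvexOn ℝ (Set.Icc (0:ℝ) (1 - ε))
      (fun t => Real.exp ((κ * θ j) * (t - ρhat j)) * f t - q / 2 * t ^ 2) := by
    intro j
    have hk := key1d (κ * θ j) (ρhat j) (1 - ε) (hκθ j) f hfpos hfconv hfmono hL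
    have hq2 : ConvexOn ℝ (Set.Icc (0:ℝ) (1 - ε)) (fun t : ℝ => (Q j - q / 2) * t ^ 2) := by
      have hnn : 0 ≤ Q j - q / 2 := by have := hqle j; linarith
      have hp : ConvexOn ℝ (Set.Icc (0:ℝ) (1 - ε)) (fun t : ℝ => t ^ 2) :=
        (Even.convexOn_pow (even_two)).subset (Set.subset_univ _) (convex_Icc _ _)
      simpa [smul_eq_mul] using hp.smul hnn
    have hsum := hk.add hq2
    have heq : ((fun t => Real.exp ((κ * θ j) * (t - ρhat j)) * f t
          - (Real.exp ((κ * θ j) * (0 - ρhat j)) * f 0 * (κ * θ j) ^ 2) / 2 * t ^ 2)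
          + fun t => (Q j - q / 2) * t ^ 2)
        = (fun t => Real.exp ((κ * θ j) * (t - ρhat j)) * f t - q / 2 * t ^ 2) := by
      funext t
      simp only [Pi.add_apply, hQdef]
      ring
    rwa [heq] at hsum
  -- the box is convex
  have hSconv : Convex ℝ {ρ : EuclideanSpace ℝ B | ∀ j, ρ j ∈ Set.Icc (0:ℝ) (1 - ε)} := by
    intro x hx y hy t s ht hs hts j
    have happ : (t • x + s • y : EuclideanSpace ℝ B) j = t * x j + s * y j := by
      simp [PiLp.add_apply, PiLp.smul_apply, smul_eq_mul]
    rw [happ]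
    exact (convex_Icc (0:ℝ) (1 - ε)) (hx j) (hy j) ht hs hts
  -- norm squared is the sum of squares
  have hnorm : ∀ ρ : EuclideanSpace ℝ B, ‖ρ‖ ^ 2 = ∑ j, (ρ j) ^ 2 := by
    intro ρ
    rw [EuclideanSpace.norm_eq, Real.sq_sqrt (by positivity)]
    congr 1
    funext j
    rw [Real.norm_eq_abs, sq_abs]
  -- convexity of the sum-of-coordinates function
  have key : ConvexOn ℝ {ρ : EuclideanSpace ℝ B | ∀ j, ρ j ∈ Set.Icc (0:ℝ) (1 - ε)}
      (fun ρ : EuclideanSpace ℝ B =>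
        ∑ j, (Real.exp (κ * θ j * (ρ j - ρhat j)) * f (ρ j) - q / 2 * (ρ j) ^ 2)) := by
    refine ⟨hSconv, ?_⟩
    intro x hx y hy t s ht hs hts
    have happ : ∀ j, (t • x + s • y : EuclideanSpace ℝ B) j = t * x j + s * y j := by
      intro j; simp [PiLp.add_apply, PiLp.smul_apply, smul_eq_mul]
    simp only [smul_eq_mul]
    calc (∑ j, (Real.exp (κ * θ j * ((t • x + s • y : EuclideanSpace ℝ B) j - ρhat j))
            * f ((t • x + s • y : EuclideanSpace ℝ B) j)
            - q / 2 * ((t • x + s • y : EuclideanSpace ℝ B) j) ^ 2))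
        ≤ ∑ j, (t * (Real.exp (κ * θ j * (x j - ρhat j)) * f (x j) - q / 2 * (x j) ^ 2)
            + s * (Real.exp (κ * θ j * (y j - ρhat j)) * f (y j) - q / 2 * (y j) ^ 2)) := by
          apply Finset.sum_le_sum
          intro j _
          rw [happ j]
          exact (hj j).2 (hx j) (hy j) ht hs hts
      _ = t * (∑ j, (Real.exp (κ * θ j * (x j - ρhat j)) * f (x j) - q / 2 * (x j) ^ 2))
          + s * (∑ j, (Real.exp (κ * θ j * (y j - ρhat j)) * f (y j) - q / 2 * (y j) ^ 2)) := by
          rw [Finset.sum_add_distrib, ← Finset.mul_sum, ← Finset.mul_sum]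
  have hfun : (fun ρ : EuclideanSpace ℝ B =>
        (∑ j, Real.exp (κ * θ j * (ρ j - ρhat j)) * f (ρ j)) - q / 2 * ‖ρ‖ ^ 2)
      = (fun ρ : EuclideanSpace ℝ B =>
        ∑ j, (Real.exp (κ * θ j * (ρ j - ρhat j)) * f (ρ j) - q / 2 * (ρ j) ^ 2)) := by
    funext ρ
    rw [hnorm ρ, Finset.mul_sum, ← Finset.sum_sub_distrib]
  rw [hfun]
  exact key
end
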